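/- Let P_1,...,P_m ∈ R[Y_1,...,Y_ℓ] with deg P_i ≤ 2, and let P_i^h ∈ R[Y_0,...,Y_ℓ] be the homogenization of P_i with respect to Y_0 (so that P_i^h is homogeneous of degree 2 and P_i^h(1, y) = P_i(y)). Let S ⊆ R^ℓ be a bounded closed semi-algebraic set defined by a conjunction/disjunction formula in the conditions P_i ≥ 0, P_i ≤ 0, P_i = 0, intersected with the ball |y| ≤ R, and let S^h ⊆ S^ℓ be defined by the corresponding formula in P_i^h together with the homogenized ball condition. Then S^h is the disjoint union of two closed sets (in the hemispheres Y_0 > 0 and Y_0 < 0), each homeomorphic to S. -/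

import Mathlib

open scoped BigOperators

/-- Positive boolean (conjunction/disjunction) formulas in the atoms
`P i ≥ 0`, `P i ≤ 0`, `P i = 0` for a family of `m` polynomials. -/
inductive PFormula (m : ℕ) where
  | ge (i : Fin m)
  | le (i : Fin m)
  | eq (i : Fin m)
  | and (φ ψ : PFormula m)
  | or (φ ψ : PFormula m)

/-- Evaluation of a positive boolean formula, given the values `v i` of the polynomials. -/
def PFormula.holds {m : ℕ} : PFormula m → (Fin m → ℝ) → Prop
  | .ge i, v => 0 ≤ v i
  | .le i, v => v i ≤ 0
  | .eq i, v => v i = 0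
  | .and φ ψ, v => φ.holds v ∧ ψ.holds v
  | .or φ ψ, v => φ.holds v ∨ ψ.holds v

lemma eval_smul_of_isHomogeneous {σ : Type*} [Fintype σ] {Q : MvPolynomial σ ℝ} {n : ℕ}
    (hQ : Q.IsHomogeneous n) (c : ℝ) (w : σ → ℝ) :
    MvPolynomial.eval (c • w) Q = c ^ n * MvPolynomial.eval w Q := by
  rw [MvPolynomial.eval_eq', MvPolynomial.eval_eq', Finset.mul_sum]
  apply Finset.sum_congr rfl
  intro d hd
  have hdeg : d.degree = n := by
    rw [Finsupp.degree_eq_weight_one]; exact hQ (MvPolynomial.mem_support_iff.mp hd)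
  have hsum : ∑ i, d i = n := by
    rw [← hdeg, Finsupp.degree]
    exact (Finset.sum_subset (Finset.subset_univ _) (by
      intro x _ hx; exact Finsupp.notMem_support_iff.mp hx)).symm
  have h1 : ∏ i, (c • w) i ^ d i = c ^ n * ∏ i, w i ^ d i := by
    simp only [Pi.smul_apply, smul_eq_mul, mul_pow]
    rw [Finset.prod_mul_distrib, Finset.prod_pow_eq_pow_sum, hsum]
  rw [h1]; ring

lemma pformula_isClosed {m : ℕ} {X : Type*} [TopologicalSpace X]
    (φ : PFormula m) (f : Fin m → X → ℝ) (hf : ∀ i, Continuous (f i)) :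
    IsClosed {x | φ.holds (fun i => f i x)} := by
  induction φ with
  | ge i => exact isClosed_le continuous_const (hf i)
  | le i => exact isClosed_le (hf i) continuous_const
  | eq i => exact isClosed_eq (hf i) continuous_const
  | and φ ψ ihφ ihψ => exact ihφ.inter ihψ
  | or φ ψ ihφ ihψ => exact ihφ.union ihψ

lemma pformula_holds_smul {m : ℕ} (φ : PFormula m) {t : ℝ} (ht : 0 < t)
    (v : Fin m → ℝ) : φ.holds (fun i => t * v i) ↔ φ.holds v := by
  induction φ with
  | ge i =>
      simp only [PFormula.holds]
      constructor <;> intro h <;> nlinarith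
  | le i =>
      simp only [PFormula.holds]
      constructor <;> intro h <;> nlinarith
  | eq i =>
      simp only [PFormula.holds, mul_eq_zero]
      constructor
      · rintro (h | h)
        · exact absurd h ht.ne'
        · exact h
      · intro h; exact Or.inr h
  | and φ ψ ihφ ihψ => simp only [PFormula.holds, ihφ, ihψ]
  | or φ ψ ihφ ihψ => simp only [PFormula.holds, ihφ, ihψ]

set_option maxHeartbeats 2000000 in
/-- Let `P₁, …, P_m ∈ ℝ[Y₁, …, Y_ℓ]` have degree `≤ 2`, and let `Pᵢʰ` be
the homogenization of `Pᵢ` with respect to a new variable `Y₀` (characterized by: `Pᵢʰ` is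
homogeneous of degree `2` and `Pᵢʰ(1, y) = Pᵢ(y)`).  Let `S ⊆ ℝᶫ` be the (bounded, closed)
set defined by a conjunction/disjunction formula `φ` in the conditions `Pᵢ ≥ 0`, `Pᵢ ≤ 0`,
`Pᵢ = 0`, intersected with the ball `|y| ≤ R` (`R > 0`), and let `Sʰ ⊆ Sᶫ` be defined on the
unit sphere by the corresponding formula in the `Pᵢʰ` together with the homogenized ball
condition.  Then `Sʰ` is the disjoint union of two closed sets, contained in the hemispheres
`Y₀ > 0` and `Y₀ < 0` respectively, each homeomorphic to `S`. -/
theorem homogenization_doubles_the_set (ℓ m : ℕ) (R : ℝ) (hR : 0 < R)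
    (P : Fin m → MvPolynomial (Fin ℓ) ℝ)
    (hdeg : ∀ i, (P i).totalDegree ≤ 2)
    (Ph : Fin m → MvPolynomial (Fin (ℓ + 1)) ℝ)
    (hPhhom : ∀ i, (Ph i).IsHomogeneous 2)
    (hPh : ∀ i (y : Fin ℓ → ℝ),
      MvPolynomial.eval (Fin.cons (1 : ℝ) y) (Ph i) = MvPolynomial.eval y (P i))
    (φ : PFormula m)
    (S : Set (Fin ℓ → ℝ))
    (hS : S = {y | φ.holds (fun i => MvPolynomial.eval y (P i)) ∧ ∑ j, y j ^ 2 ≤ R ^ 2})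
    (Sh : Set (Fin (ℓ + 1) → ℝ))
    (hSh : Sh = {z | (∑ j, z j ^ 2 = 1) ∧
      φ.holds (fun i => MvPolynomial.eval z (Ph i)) ∧
      ∑ j : Fin ℓ, z j.succ ^ 2 ≤ R ^ 2 * z 0 ^ 2}) :
    ∃ Sp Sn : Set (Fin (ℓ + 1) → ℝ),
      Sh = Sp ∪ Sn ∧ Disjoint Sp Sn ∧
      (∀ z ∈ Sp, 0 < z 0) ∧ (∀ z ∈ Sn, z 0 < 0) ∧
      IsClosed Sp ∧ IsClosed Sn ∧
      Nonempty (Sp ≃ₜ S) ∧ Nonempty (Sn ≃ₜ S) := by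
  classical
  -- key : on Sh, the coordinate z 0 never vanishes
  have key0 : ∀ z ∈ Sh, z 0 ≠ 0 := by
    intro z hz h0
    rw [hSh] at hz
    obtain ⟨hsph, -, hball⟩ := hz
    rw [Fin.sum_univ_succ] at hsph
    rw [h0] at hsph hball
    simp at hsph hball
    have : ∀ j : Fin ℓ, z j.succ = 0 := by
      intro j
      have h1 : (0:ℝ) ≤ ∑ k : Fin ℓ, z k.succ ^ 2 :=
        Finset.sum_nonneg fun k _ => sq_nonneg _
      have h2 : ∑ k : Fin ℓ, z k.succ ^ 2 = 0 := le_antisymm hball h1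
      have := (Finset.sum_eq_zero_iff_of_nonneg
        (fun k _ => sq_nonneg (z k.succ))).mp h2 j (Finset.mem_univ j)
      exact sq_eq_zero_iff.mp this
    rw [Finset.sum_eq_zero (fun j _ => by rw [this j]; ring)] at hsph
    norm_num at hsph
  -- Sh is invariant under negation
  have hneg : ∀ z ∈ Sh, (-z) ∈ Sh := by
    intro z hz
    rw [hSh] at hz ⊢
    obtain ⟨h1, h2, h3⟩ := hz
    refine ⟨by simpa [neg_sq] using h1, ?_, by simpa [neg_sq] using h3⟩
    have : ∀ i, MvPolynomial.eval (-z) (Ph i) = MvPolynomial.eval z (Ph i) := by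
      intro i
      have := eval_smul_of_isHomogeneous (hPhhom i) (-1) z
      simpa using this
    simpa only [this] using h2
  -- Sh is closed
  have hclosed : IsClosed Sh := by
    rw [hSh]
    have h1 : IsClosed {z : Fin (ℓ+1) → ℝ | ∑ j, z j ^ 2 = 1} :=
      isClosed_eq (by continuity) continuous_const
    have h2 : IsClosed {z : Fin (ℓ+1) → ℝ |
        φ.holds (fun i => MvPolynomial.eval z (Ph i))} :=
      pformula_isClosed φ (fun i z => MvPolynomial.eval z (Ph i))
        (fun i => MvPolynomial.continuous_eval _)
    have h3 : IsClosed {z : Fin (ℓ+1) → ℝ |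
        ∑ j : Fin ℓ, z j.succ ^ 2 ≤ R ^ 2 * z 0 ^ 2} :=
      isClosed_le (by continuity) (by continuity)
    exact (h1.inter (h2.inter h3))
  set A : Set (Fin (ℓ+1) → ℝ) := Sh ∩ {z | 0 ≤ z 0} with hA
  set B : Set (Fin (ℓ+1) → ℝ) := Sh ∩ {z | z 0 ≤ 0} with hB
  have hApos : ∀ z ∈ A, 0 < z 0 := fun z hz =>
    lt_of_le_of_ne hz.2 (Ne.symm (key0 z hz.1))
  have hBneg : ∀ z ∈ B, z 0 < 0 := fun z hz =>
    lt_of_le_of_ne hz.2 (key0 z hz.1)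
  -- membership lemma 1: projecting a point of Sh with z 0 > 0 into S
  have mem1 : ∀ z ∈ Sh, 0 < z 0 → (fun j : Fin ℓ => z j.succ / z 0) ∈ S := by
    intro z hz h0
    rw [hSh] at hz
    obtain ⟨hsph, hhold, hball⟩ := hz
    set y : Fin ℓ → ℝ := fun j => z j.succ / z 0 with hy
    have hzy : z = z 0 • (Fin.cons 1 y : Fin (ℓ+1) → ℝ) := by
      funext j
      induction j using Fin.cases with
      | zero => simp
      | succ k => simp [hy]; field_simp
    have heval : ∀ i, MvPolynomial.eval z (Ph i)
        = z 0 ^ 2 * MvPolynomial.eval y (P i) := by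
      intro i
      rw [hzy, eval_smul_of_isHomogeneous (hPhhom i), hPh]; simp
    rw [hS]
    constructor
    · have := hhold
      simp only [heval] at this
      exact (pformula_holds_smul φ (by positivity) _).mp this
    · have : ∑ j : Fin ℓ, y j ^ 2 = (∑ j : Fin ℓ, z j.succ ^ 2) / z 0 ^ 2 := by
        rw [Finset.sum_div]
        exact Finset.sum_congr rfl fun j _ => by rw [hy]; field_simp
      rw [this, div_le_iff₀ (by positivity)]
      linarith [hball]
  -- membership lemma 2: lifting a point of S onto the sphere
  have mem2 : ∀ y ∈ S,
      (fun j : Fin (ℓ+1) => (Fin.cons (1:ℝ) y : Fin (ℓ+1) → ℝ) j / Real.sqrt (1 + ∑ k, y k ^ 2)) ∈ A := by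
    intro y hy
    rw [hS] at hy
    obtain ⟨hhold, hball⟩ := hy
    have hsumnn : (0:ℝ) ≤ ∑ k, y k ^ 2 := Finset.sum_nonneg fun k _ => sq_nonneg _
    set N : ℝ := Real.sqrt (1 + ∑ k, y k ^ 2) with hN
    have hNpos : 0 < N := Real.sqrt_pos.mpr (by linarith)
    have hN2 : N ^ 2 = 1 + ∑ k, y k ^ 2 := Real.sq_sqrt (by linarith)
    set z : Fin (ℓ+1) → ℝ := fun j => (Fin.cons (1:ℝ) y : Fin (ℓ+1) → ℝ) j / N with hz
    have hzsm : z = N⁻¹ • (Fin.cons 1 y : Fin (ℓ+1) → ℝ) := by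
      funext j; simp [hz, div_eq_inv_mul]
    have hconssum : ∑ j : Fin (ℓ+1), ((Fin.cons (1:ℝ) y : Fin (ℓ+1) → ℝ) j) ^ 2 = 1 + ∑ k, y k ^ 2 := by
      rw [Fin.sum_univ_succ]; simp
    refine ⟨?_, ?_⟩
    · rw [hSh]
      refine ⟨?_, ?_, ?_⟩
      · have : ∑ j, z j ^ 2 = (1 + ∑ k, y k ^ 2) / N ^ 2 := by
          rw [← hconssum, Finset.sum_div]
          exact Finset.sum_congr rfl fun j _ => by rw [hz]; field_simp
        rw [this, hN2, div_self (by positivity)]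
      · have heval : ∀ i, MvPolynomial.eval z (Ph i)
            = (N⁻¹) ^ 2 * MvPolynomial.eval y (P i) := by
          intro i
          rw [hzsm, eval_smul_of_isHomogeneous (hPhhom i), hPh]
        simp only [heval]
        exact (pformula_holds_smul φ (by positivity) _).mpr hhold
      · have h1 : ∑ j : Fin ℓ, z j.succ ^ 2 = (∑ k, y k ^ 2) / N ^ 2 := by
          rw [Finset.sum_div]
          exact Finset.sum_congr rfl fun j _ => by rw [hz]; simp [div_pow]
        have h2 : z 0 ^ 2 = 1 / N ^ 2 := by rw [hz]; simp [div_pow]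
        rw [h1, h2]
        rw [div_le_iff₀ (by positivity)]
        have : R ^ 2 * (1 / N ^ 2) * N ^ 2 = R ^ 2 := by field_simp
        rw [this]; exact hball
    · show 0 ≤ z 0
      rw [hz]; simp; positivity
  -- the homeomorphism A ≃ₜ S
  have homeoA : Nonempty ((A : Set (Fin (ℓ+1) → ℝ)) ≃ₜ S) := by
    refine ⟨{
      toFun := fun z => ⟨fun j => z.1 j.succ / z.1 0, mem1 z.1 z.2.1 (hApos z.1 z.2)⟩
      invFun := fun y =>
        ⟨fun j => (Fin.cons (1:ℝ) y.1 : Fin (ℓ+1) → ℝ) j / Real.sqrt (1 + ∑ k, y.1 k ^ 2), mem2 y.1 y.2⟩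
      left_inv := ?_
      right_inv := ?_
      continuous_toFun := ?_
      continuous_invFun := ?_ }⟩
    · rintro ⟨z, hz⟩
      have h0 : 0 < z 0 := hApos z hz
      have hzSh := hz.1
      rw [hSh] at hzSh
      obtain ⟨hsph, -, -⟩ := hzSh
      apply Subtype.ext
      have hsum : ∑ j : Fin ℓ, (z j.succ / z 0) ^ 2 = (1 - z 0 ^ 2) / z 0 ^ 2 := by
        have : ∑ j : Fin ℓ, (z j.succ / z 0) ^ 2
            = (∑ j : Fin ℓ, z j.succ ^ 2) / z 0 ^ 2 := by
          rw [Finset.sum_div]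
          exact Finset.sum_congr rfl fun j _ => by field_simp
        rw [this]
        congr 1
        rw [Fin.sum_univ_succ] at hsph
        linarith
      have hNval : Real.sqrt (1 + ∑ j : Fin ℓ, (z j.succ / z 0) ^ 2) = 1 / z 0 := by
        rw [hsum]
        have : 1 + (1 - z 0 ^ 2) / z 0 ^ 2 = (1 / z 0) ^ 2 := by field_simp; ring
        rw [this, Real.sqrt_sq (by positivity)]
      funext j
      show (Fin.cons (1:ℝ) _ : Fin (ℓ+1) → ℝ) j / Real.sqrt (1 + ∑ k : Fin ℓ, (z k.succ / z 0) ^ 2) = z j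
      rw [hNval]
      induction j using Fin.cases with
      | zero => simp
      | succ k => simp; field_simp
    · rintro ⟨y, hy⟩
      apply Subtype.ext
      have hsumnn : (0:ℝ) ≤ ∑ k, y k ^ 2 := Finset.sum_nonneg fun k _ => sq_nonneg _
      have hNpos : 0 < Real.sqrt (1 + ∑ k, y k ^ 2) := Real.sqrt_pos.mpr (by linarith)
      funext j
      show ((Fin.cons (1:ℝ) y : Fin (ℓ+1) → ℝ) j.succ / Real.sqrt (1 + ∑ k, y k ^ 2))
          / ((Fin.cons (1:ℝ) y : Fin (ℓ+1) → ℝ) 0 / Real.sqrt (1 + ∑ k, y k ^ 2)) = y j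
      simp only [Fin.cons_succ, Fin.cons_zero]
      field_simp
    · apply Continuous.subtype_mk
      apply continuous_pi
      intro j
      exact ((continuous_apply (Fin.succ j)).comp continuous_subtype_val).div
        ((continuous_apply 0).comp continuous_subtype_val)
        (fun z => (hApos z.1 z.2).ne')
    · apply Continuous.subtype_mk
      apply continuous_pi
      intro j
      have hc1 : Continuous fun y : S => (Fin.cons (1:ℝ) y.1 : Fin (ℓ+1) → ℝ) j := by
        induction j using Fin.cases with
        | zero => simpa using continuous_const
        | succ k =>
            simp only [Fin.cons_succ]
            exact (continuous_apply k).comp continuous_subtype_val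
      have hc2 : Continuous fun y : S => Real.sqrt (1 + ∑ k, y.1 k ^ 2) :=
        Real.continuous_sqrt.comp (continuous_const.add
          (continuous_finset_sum _ fun k _ =>
            ((continuous_apply k).comp continuous_subtype_val).pow 2))
      exact hc1.div hc2 (fun y => by
        have hsumnn : (0:ℝ) ≤ ∑ k, y.1 k ^ 2 := Finset.sum_nonneg fun k _ => sq_nonneg _
        positivity)
  -- the homeomorphism B ≃ₜ A by negation
  have homeoB : Nonempty ((B : Set (Fin (ℓ+1) → ℝ)) ≃ₜ S) := by
    obtain ⟨e⟩ := homeoA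
    refine ⟨Homeomorph.trans ⟨⟨?_, ?_, ?_, ?_⟩, ?_, ?_⟩ e⟩
    · exact fun z => ⟨-z.1, hneg z.1 z.2.1, by
        have h : z.1 0 ≤ 0 := z.2.2
        show 0 ≤ (-z.1) 0
        simpa using neg_nonneg.mpr h⟩
    · exact fun z => ⟨-z.1, hneg z.1 z.2.1, by
        have h : 0 ≤ z.1 0 := z.2.2
        show (-z.1) 0 ≤ 0
        simpa using neg_nonpos.mpr h⟩
    · rintro ⟨z, hz⟩; simp
    · rintro ⟨z, hz⟩; simp
    · exact (continuous_subtype_val.neg).subtype_mk _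
    · exact (continuous_subtype_val.neg).subtype_mk _
  refine ⟨A, B, ?_, ?_, hApos, hBneg, ?_, ?_, homeoA, homeoB⟩
  · ext z
    constructor
    · intro hz
      rcases le_total 0 (z 0) with h | h
      · exact Or.inl ⟨hz, h⟩
      · exact Or.inr ⟨hz, h⟩
    · rintro (hz | hz) <;> exact hz.1
  · rw [Set.disjoint_left]
    rintro z ⟨hz1, hz2⟩ ⟨_, hz3⟩
    exact key0 z hz1 (le_antisymm hz3 hz2)
  · exact hclosed.inter (isClosed_le continuous_const (continuous_apply 0))
  · exact hclosed.inter (isClosed_le (continuous_apply 0) continuous_const)
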